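/- The linear map α ↦ α ∧ ψ₀ from Λ²(ℝ⁷)* to Λ⁶(ℝ⁷)* has kernel of dimension 14, where ψ₀ is the standard G2 4-form; equivalently, the subspace Λ²₁₄ = {α ∈ Λ²(ℝ⁷)* : α ∧ ψ₀ = 0} has dimension 14. -/

import Mathlib

set_option synthInstance.maxHeartbeats 1000000
set_option maxHeartbeats 1000000

noncomputable section

/-- `ℝ⁷`. -/
abbrev V : Type := Fin 7 → ℝ
/-- The dual space `(ℝ⁷)*`. -/
abbrev Vd : Type := Module.Dual ℝ V
/-- The exterior algebra `Λ(ℝ⁷)*` of the dual space; wedge product is multiplication. -/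
abbrev Lam : Type := ExteriorAlgebra ℝ Vd

/-- The standard basis vectors of `ℝ⁷`. -/
def e (i : Fin 7) : V := Pi.single i 1
/-- The standard dual basis `θ¹,...,θ⁷` of `(ℝ⁷)*` (0-indexed). -/
def θ (i : Fin 7) : Vd := LinearMap.proj i

/-- `θ^i` as an element of the exterior algebra. -/
def θ1 (i : Fin 7) : Lam := ExteriorAlgebra.ι ℝ (θ i)
/-- `θ^{ijk} = θ^i ∧ θ^j ∧ θ^k`. -/
def w3 (i j k : Fin 7) : Lam := θ1 i * θ1 j * θ1 k
/-- `θ^{ijkl}`. -/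
def w4 (i j k l : Fin 7) : Lam := θ1 i * θ1 j * θ1 k * θ1 l

/-- The standard G₂ 3-form
`φ₀ = θ^{123} + θ^{145} + θ^{167} + θ^{246} − θ^{257} − θ^{347} − θ^{356}` (indices 0-based). -/
def phi0 : Lam :=
  w3 0 1 2 + w3 0 3 4 + w3 0 5 6 + w3 1 3 5 - w3 1 4 6 - w3 2 3 6 - w3 2 4 5
/-- The standard G₂ 4-form
`ψ₀ = θ^{4567} + θ^{2367} + θ^{2345} + θ^{1357} − θ^{1346} − θ^{1256} − θ^{1247}`. -/
def psi0 : Lam :=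
  w4 3 4 5 6 + w4 1 2 5 6 + w4 1 2 3 4 + w4 0 2 4 6 - w4 0 2 3 5 - w4 0 1 4 5 - w4 0 1 3 6
/-- The Euclidean volume form `vol₀ = θ^{1⋯7}`. -/
def vol0 : Lam := θ1 0 * θ1 1 * θ1 2 * θ1 3 * θ1 4 * θ1 5 * θ1 6

/-- Evaluation of a `k`-fold wedge of covectors on a `k`-tuple of vectors, as an
alternating map in the covectors: `(f₁,…,f_k) ↦ det (f_a (x b))`. -/
def evalAt {k : ℕ} (x : Fin k → V) : Vd [⋀^Fin k]→ₗ[ℝ] ℝ :=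
  (Matrix.detRowAlternating : (Fin k → ℝ) [⋀^Fin k]→ₗ[ℝ] ℝ).compLinearMap
    (LinearMap.pi fun b => LinearMap.applyₗ (x b))

/-- Evaluation of (the degree-`k` part of) an element of `Λ(ℝ⁷)*` on a `k`-tuple of vectors. -/
def evalForm (k : ℕ) (x : Fin k → V) : Lam →ₗ[ℝ] ℝ :=
  ExteriorAlgebra.liftAlternating fun i =>
    if h : i = k then by subst h; exact evalAt x else 0

-- ### Auxiliary development ###
open ExteriorAlgebra

lemma θ1_anticomm (i j : Fin 7) : θ1 i * θ1 j = -(θ1 j * θ1 i) :=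
  eq_neg_of_add_eq_zero_left (ι_add_mul_swap _ _)

lemma θ1_anticomm' (i j : Fin 7) (x : Lam) : θ1 i * (θ1 j * x) = -(θ1 j * (θ1 i * x)) := by
  rw [← mul_assoc, θ1_anticomm i j, neg_mul, mul_assoc]

lemma θ1_sq (i : Fin 7) : θ1 i * θ1 i = 0 := ExteriorAlgebra.ι_sq_zero _

lemma θ1_sq' (i : Fin 7) (x : Lam) : θ1 i * (θ1 i * x) = 0 := by
  rw [← mul_assoc, θ1_sq, zero_mul]

@[simp] lemma sw10 : θ1 1 * θ1 0 = -(θ1 0 * θ1 1) := θ1_anticomm 1 0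
@[simp] lemma sw10' (x : Lam) : θ1 1 * (θ1 0 * x) = -(θ1 0 * (θ1 1 * x)) := θ1_anticomm' 1 0 x
@[simp] lemma sw20 : θ1 2 * θ1 0 = -(θ1 0 * θ1 2) := θ1_anticomm 2 0
@[simp] lemma sw20' (x : Lam) : θ1 2 * (θ1 0 * x) = -(θ1 0 * (θ1 2 * x)) := θ1_anticomm' 2 0 x
@[simp] lemma sw30 : θ1 3 * θ1 0 = -(θ1 0 * θ1 3) := θ1_anticomm 3 0
@[simp] lemma sw30' (x : Lam) : θ1 3 * (θ1 0 * x) = -(θ1 0 * (θ1 3 * x)) := θ1_anticomm' 3 0 x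
@[simp] lemma sw40 : θ1 4 * θ1 0 = -(θ1 0 * θ1 4) := θ1_anticomm 4 0
@[simp] lemma sw40' (x : Lam) : θ1 4 * (θ1 0 * x) = -(θ1 0 * (θ1 4 * x)) := θ1_anticomm' 4 0 x
@[simp] lemma sw50 : θ1 5 * θ1 0 = -(θ1 0 * θ1 5) := θ1_anticomm 5 0
@[simp] lemma sw50' (x : Lam) : θ1 5 * (θ1 0 * x) = -(θ1 0 * (θ1 5 * x)) := θ1_anticomm' 5 0 x
@[simp] lemma sw60 : θ1 6 * θ1 0 = -(θ1 0 * θ1 6) := θ1_anticomm 6 0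
@[simp] lemma sw60' (x : Lam) : θ1 6 * (θ1 0 * x) = -(θ1 0 * (θ1 6 * x)) := θ1_anticomm' 6 0 x
@[simp] lemma sw21 : θ1 2 * θ1 1 = -(θ1 1 * θ1 2) := θ1_anticomm 2 1
@[simp] lemma sw21' (x : Lam) : θ1 2 * (θ1 1 * x) = -(θ1 1 * (θ1 2 * x)) := θ1_anticomm' 2 1 x
@[simp] lemma sw31 : θ1 3 * θ1 1 = -(θ1 1 * θ1 3) := θ1_anticomm 3 1
@[simp] lemma sw31' (x : Lam) : θ1 3 * (θ1 1 * x) = -(θ1 1 * (θ1 3 * x)) := θ1_anticomm' 3 1 x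
@[simp] lemma sw41 : θ1 4 * θ1 1 = -(θ1 1 * θ1 4) := θ1_anticomm 4 1
@[simp] lemma sw41' (x : Lam) : θ1 4 * (θ1 1 * x) = -(θ1 1 * (θ1 4 * x)) := θ1_anticomm' 4 1 x
@[simp] lemma sw51 : θ1 5 * θ1 1 = -(θ1 1 * θ1 5) := θ1_anticomm 5 1
@[simp] lemma sw51' (x : Lam) : θ1 5 * (θ1 1 * x) = -(θ1 1 * (θ1 5 * x)) := θ1_anticomm' 5 1 x
@[simp] lemma sw61 : θ1 6 * θ1 1 = -(θ1 1 * θ1 6) := θ1_anticomm 6 1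
@[simp] lemma sw61' (x : Lam) : θ1 6 * (θ1 1 * x) = -(θ1 1 * (θ1 6 * x)) := θ1_anticomm' 6 1 x
@[simp] lemma sw32 : θ1 3 * θ1 2 = -(θ1 2 * θ1 3) := θ1_anticomm 3 2
@[simp] lemma sw32' (x : Lam) : θ1 3 * (θ1 2 * x) = -(θ1 2 * (θ1 3 * x)) := θ1_anticomm' 3 2 x
@[simp] lemma sw42 : θ1 4 * θ1 2 = -(θ1 2 * θ1 4) := θ1_anticomm 4 2
@[simp] lemma sw42' (x : Lam) : θ1 4 * (θ1 2 * x) = -(θ1 2 * (θ1 4 * x)) := θ1_anticomm' 4 2 x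
@[simp] lemma sw52 : θ1 5 * θ1 2 = -(θ1 2 * θ1 5) := θ1_anticomm 5 2
@[simp] lemma sw52' (x : Lam) : θ1 5 * (θ1 2 * x) = -(θ1 2 * (θ1 5 * x)) := θ1_anticomm' 5 2 x
@[simp] lemma sw62 : θ1 6 * θ1 2 = -(θ1 2 * θ1 6) := θ1_anticomm 6 2
@[simp] lemma sw62' (x : Lam) : θ1 6 * (θ1 2 * x) = -(θ1 2 * (θ1 6 * x)) := θ1_anticomm' 6 2 x
@[simp] lemma sw43 : θ1 4 * θ1 3 = -(θ1 3 * θ1 4) := θ1_anticomm 4 3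
@[simp] lemma sw43' (x : Lam) : θ1 4 * (θ1 3 * x) = -(θ1 3 * (θ1 4 * x)) := θ1_anticomm' 4 3 x
@[simp] lemma sw53 : θ1 5 * θ1 3 = -(θ1 3 * θ1 5) := θ1_anticomm 5 3
@[simp] lemma sw53' (x : Lam) : θ1 5 * (θ1 3 * x) = -(θ1 3 * (θ1 5 * x)) := θ1_anticomm' 5 3 x
@[simp] lemma sw63 : θ1 6 * θ1 3 = -(θ1 3 * θ1 6) := θ1_anticomm 6 3
@[simp] lemma sw63' (x : Lam) : θ1 6 * (θ1 3 * x) = -(θ1 3 * (θ1 6 * x)) := θ1_anticomm' 6 3 x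
@[simp] lemma sw54 : θ1 5 * θ1 4 = -(θ1 4 * θ1 5) := θ1_anticomm 5 4
@[simp] lemma sw54' (x : Lam) : θ1 5 * (θ1 4 * x) = -(θ1 4 * (θ1 5 * x)) := θ1_anticomm' 5 4 x
@[simp] lemma sw64 : θ1 6 * θ1 4 = -(θ1 4 * θ1 6) := θ1_anticomm 6 4
@[simp] lemma sw64' (x : Lam) : θ1 6 * (θ1 4 * x) = -(θ1 4 * (θ1 6 * x)) := θ1_anticomm' 6 4 x
@[simp] lemma sw65 : θ1 6 * θ1 5 = -(θ1 5 * θ1 6) := θ1_anticomm 6 5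
@[simp] lemma sw65' (x : Lam) : θ1 6 * (θ1 5 * x) = -(θ1 5 * (θ1 6 * x)) := θ1_anticomm' 6 5 x

lemma hmul0 : θ1 0 * θ1 1 * psi0 = θ1 0 * (θ1 1 * (θ1 3 * (θ1 4 * (θ1 5 * (θ1 6))))) := by
  simp [psi0, w4, mul_add, mul_sub, mul_neg, neg_mul, mul_assoc, θ1_sq, θ1_sq']

lemma hmul1 : θ1 0 * θ1 2 * psi0 = θ1 0 * (θ1 2 * (θ1 3 * (θ1 4 * (θ1 5 * (θ1 6))))) := by
  simp [psi0, w4, mul_add, mul_sub, mul_neg, neg_mul, mul_assoc, θ1_sq, θ1_sq']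

lemma hmul2 : θ1 0 * θ1 3 * psi0 = θ1 0 * (θ1 1 * (θ1 2 * (θ1 3 * (θ1 5 * (θ1 6))))) := by
  simp [psi0, w4, mul_add, mul_sub, mul_neg, neg_mul, mul_assoc, θ1_sq, θ1_sq']

lemma hmul3 : θ1 0 * θ1 4 * psi0 = θ1 0 * (θ1 1 * (θ1 2 * (θ1 4 * (θ1 5 * (θ1 6))))) := by
  simp [psi0, w4, mul_add, mul_sub, mul_neg, neg_mul, mul_assoc, θ1_sq, θ1_sq']

lemma hmul4 : θ1 0 * θ1 5 * psi0 = θ1 0 * (θ1 1 * (θ1 2 * (θ1 3 * (θ1 4 * (θ1 5))))) := by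
  simp [psi0, w4, mul_add, mul_sub, mul_neg, neg_mul, mul_assoc, θ1_sq, θ1_sq']

lemma hmul5 : θ1 0 * θ1 6 * psi0 = θ1 0 * (θ1 1 * (θ1 2 * (θ1 3 * (θ1 4 * (θ1 6))))) := by
  simp [psi0, w4, mul_add, mul_sub, mul_neg, neg_mul, mul_assoc, θ1_sq, θ1_sq']

lemma hmul6 : θ1 1 * θ1 2 * psi0 = θ1 1 * (θ1 2 * (θ1 3 * (θ1 4 * (θ1 5 * (θ1 6))))) := by
  simp [psi0, w4, mul_add, mul_sub, mul_neg, neg_mul, mul_assoc, θ1_sq, θ1_sq']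

lemma hmul7 : θ1 1 * θ1 3 * psi0 = -(θ1 0 * (θ1 1 * (θ1 2 * (θ1 3 * (θ1 4 * (θ1 6)))))) := by
  simp [psi0, w4, mul_add, mul_sub, mul_neg, neg_mul, mul_assoc, θ1_sq, θ1_sq']

lemma hmul8 : θ1 1 * θ1 4 * psi0 = -(θ1 0 * (θ1 1 * (θ1 2 * (θ1 3 * (θ1 4 * (θ1 5)))))) := by
  simp [psi0, w4, mul_add, mul_sub, mul_neg, neg_mul, mul_assoc, θ1_sq, θ1_sq']

lemma hmul9 : θ1 1 * θ1 5 * psi0 = θ1 0 * (θ1 1 * (θ1 2 * (θ1 4 * (θ1 5 * (θ1 6))))) := by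
  simp [psi0, w4, mul_add, mul_sub, mul_neg, neg_mul, mul_assoc, θ1_sq, θ1_sq']

lemma hmul10 : θ1 1 * θ1 6 * psi0 = θ1 0 * (θ1 1 * (θ1 2 * (θ1 3 * (θ1 5 * (θ1 6))))) := by
  simp [psi0, w4, mul_add, mul_sub, mul_neg, neg_mul, mul_assoc, θ1_sq, θ1_sq']

lemma hmul11 : θ1 2 * θ1 3 * psi0 = -(θ1 0 * (θ1 1 * (θ1 2 * (θ1 3 * (θ1 4 * (θ1 5)))))) := by
  simp [psi0, w4, mul_add, mul_sub, mul_neg, neg_mul, mul_assoc, θ1_sq, θ1_sq']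

lemma hmul12 : θ1 2 * θ1 4 * psi0 = θ1 0 * (θ1 1 * (θ1 2 * (θ1 3 * (θ1 4 * (θ1 6))))) := by
  simp [psi0, w4, mul_add, mul_sub, mul_neg, neg_mul, mul_assoc, θ1_sq, θ1_sq']

lemma hmul13 : θ1 2 * θ1 5 * psi0 = θ1 0 * (θ1 1 * (θ1 2 * (θ1 3 * (θ1 5 * (θ1 6))))) := by
  simp [psi0, w4, mul_add, mul_sub, mul_neg, neg_mul, mul_assoc, θ1_sq, θ1_sq']

lemma hmul14 : θ1 2 * θ1 6 * psi0 = -(θ1 0 * (θ1 1 * (θ1 2 * (θ1 4 * (θ1 5 * (θ1 6)))))) := by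
  simp [psi0, w4, mul_add, mul_sub, mul_neg, neg_mul, mul_assoc, θ1_sq, θ1_sq']

lemma hmul15 : θ1 3 * θ1 4 * psi0 = θ1 1 * (θ1 2 * (θ1 3 * (θ1 4 * (θ1 5 * (θ1 6))))) := by
  simp [psi0, w4, mul_add, mul_sub, mul_neg, neg_mul, mul_assoc, θ1_sq, θ1_sq']

lemma hmul16 : θ1 3 * θ1 5 * psi0 = -(θ1 0 * (θ1 2 * (θ1 3 * (θ1 4 * (θ1 5 * (θ1 6)))))) := by
  simp [psi0, w4, mul_add, mul_sub, mul_neg, neg_mul, mul_assoc, θ1_sq, θ1_sq']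

lemma hmul17 : θ1 3 * θ1 6 * psi0 = -(θ1 0 * (θ1 1 * (θ1 3 * (θ1 4 * (θ1 5 * (θ1 6)))))) := by
  simp [psi0, w4, mul_add, mul_sub, mul_neg, neg_mul, mul_assoc, θ1_sq, θ1_sq']

lemma hmul18 : θ1 4 * θ1 5 * psi0 = -(θ1 0 * (θ1 1 * (θ1 3 * (θ1 4 * (θ1 5 * (θ1 6)))))) := by
  simp [psi0, w4, mul_add, mul_sub, mul_neg, neg_mul, mul_assoc, θ1_sq, θ1_sq']

lemma hmul19 : θ1 4 * θ1 6 * psi0 = θ1 0 * (θ1 2 * (θ1 3 * (θ1 4 * (θ1 5 * (θ1 6))))) := by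
  simp [psi0, w4, mul_add, mul_sub, mul_neg, neg_mul, mul_assoc, θ1_sq, θ1_sq']

lemma hmul20 : θ1 5 * θ1 6 * psi0 = θ1 1 * (θ1 2 * (θ1 3 * (θ1 4 * (θ1 5 * (θ1 6))))) := by
  simp [psi0, w4, mul_add, mul_sub, mul_neg, neg_mul, mul_assoc, θ1_sq, θ1_sq']

def pi1 : Fin 21 → Fin 7 := ![0,0,0,0,0,0,1,1,1,1,1,2,2,2,2,3,3,3,4,4,5]
def pi2 : Fin 21 → Fin 7 := ![1,2,3,4,5,6,2,3,4,5,6,3,4,5,6,4,5,6,5,6,6]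
def bb : Fin 21 → Lam := fun k => θ1 (pi1 k) * θ1 (pi2 k)

def cpl (m : Fin 7) (a : Fin 6) : Fin 7 :=
  if a.val < m.val then ⟨a.val % 7, Nat.mod_lt _ (by omega)⟩
  else ⟨(a.val + 1) % 7, Nat.mod_lt _ (by omega)⟩

def ρ (m m' : Fin 7) : Fin 6 :=
  if m'.val < m.val then ⟨m'.val % 6, Nat.mod_lt _ (by omega)⟩
  else ⟨(m'.val - 1) % 6, Nat.mod_lt _ (by omega)⟩

def vv : Fin 7 → Lam := fun m => ιMulti ℝ 6 (fun a => θ (cpl m a))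

def F : (Fin 21 → ℝ) →ₗ[ℝ] Lam := Fintype.linearCombination ℝ bb
def J : (Fin 7 → ℝ) →ₗ[ℝ] Lam := Fintype.linearCombination ℝ vv

def pr (k : Fin 21) : (Fin 21 → ℝ) →ₗ[ℝ] ℝ := LinearMap.proj k

def Φ : (Fin 21 → ℝ) →ₗ[ℝ] (Fin 7 → ℝ) :=
  LinearMap.pi (![pr 6 + pr 15 + pr 20, pr 1 - pr 16 + pr 19, pr 0 - pr 17 - pr 18,
    pr 3 + pr 9 - pr 14, pr 2 + pr 10 + pr 13, pr 5 - pr 7 + pr 12, pr 4 - pr 8 - pr 11])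

def G : Lam →ₗ[ℝ] (Fin 21 → ℝ) := LinearMap.pi fun k => evalForm 2 ![e (pi1 k), e (pi2 k)]
def H : Lam →ₗ[ℝ] (Fin 7 → ℝ) := LinearMap.pi fun m' => evalForm 6 (fun b => e (cpl m' b))

lemma Φapp0 (c : Fin 21 → ℝ) : Φ c 0 = c 6 + c 15 + c 20 := rfl
lemma Φapp1 (c : Fin 21 → ℝ) : Φ c 1 = c 1 - c 16 + c 19 := rfl
lemma Φapp2 (c : Fin 21 → ℝ) : Φ c 2 = c 0 - c 17 - c 18 := rfl
lemma Φapp3 (c : Fin 21 → ℝ) : Φ c 3 = c 3 + c 9 - c 14 := rfl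
lemma Φapp4 (c : Fin 21 → ℝ) : Φ c 4 = c 2 + c 10 + c 13 := rfl
lemma Φapp5 (c : Fin 21 → ℝ) : Φ c 5 = c 5 - c 7 + c 12 := rfl
lemma Φapp6 (c : Fin 21 → ℝ) : Φ c 6 = c 4 - c 8 - c 11 := rfl

lemma theta_apply (i j : Fin 7) : θ i (e j) = if i = j then 1 else 0 := by
  simp [θ, e, LinearMap.proj, Pi.single_apply]

lemma iMulti2 (y : Fin 2 → Vd) : ιMulti ℝ 2 y = ι ℝ (y 0) * ι ℝ (y 1) := by
  rw [ιMulti_apply]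
  show (ι ℝ (y 0) * (ι ℝ (y 1) * 1)) = _
  rw [mul_one]

lemma iMulti6 (y : Fin 6 → Vd) : ιMulti ℝ 6 y =
    ι ℝ (y 0) * (ι ℝ (y 1) * (ι ℝ (y 2) * (ι ℝ (y 3) * (ι ℝ (y 4) * ι ℝ (y 5))))) := by
  rw [ιMulti_apply]
  show (ι ℝ (y 0) * (ι ℝ (y 1) * (ι ℝ (y 2) * (ι ℝ (y 3) * (ι ℝ (y 4) * (ι ℝ (y 5) * 1)))))) = _
  rw [mul_one]

lemma evalForm_iMulti {n : ℕ} (x : Fin n → V) (y : Fin n → Vd) :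
    evalForm n x (ιMulti ℝ n y) = Matrix.det (Matrix.of fun a b => y a (x b)) := by
  rw [evalForm, liftAlternating_apply_ιMulti, dif_pos rfl]
  rfl

lemma eval2 (a c i j : Fin 7) : evalForm 2 ![e a, e c] (θ1 i * θ1 j) =
    (if i = a then 1 else 0) * (if j = c then 1 else 0) -
      (if i = c then 1 else 0) * (if j = a then 1 else 0) := by
  have h : θ1 i * θ1 j = ιMulti ℝ 2 ![θ i, θ j] := by rw [iMulti2]; rfl
  rw [h, evalForm_iMulti, Matrix.det_fin_two]
  simp [theta_apply]

lemma vveq0 : vv 0 = θ1 1 * (θ1 2 * (θ1 3 * (θ1 4 * (θ1 5 * (θ1 6))))) := by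
  rw [show (vv 0 : Lam) = ιMulti ℝ 6 (fun a => θ (cpl 0 a)) from rfl, iMulti6]
  rfl

lemma vveq1 : vv 1 = θ1 0 * (θ1 2 * (θ1 3 * (θ1 4 * (θ1 5 * (θ1 6))))) := by
  rw [show (vv 1 : Lam) = ιMulti ℝ 6 (fun a => θ (cpl 1 a)) from rfl, iMulti6]
  rfl

lemma vveq2 : vv 2 = θ1 0 * (θ1 1 * (θ1 3 * (θ1 4 * (θ1 5 * (θ1 6))))) := by
  rw [show (vv 2 : Lam) = ιMulti ℝ 6 (fun a => θ (cpl 2 a)) from rfl, iMulti6]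
  rfl

lemma vveq3 : vv 3 = θ1 0 * (θ1 1 * (θ1 2 * (θ1 4 * (θ1 5 * (θ1 6))))) := by
  rw [show (vv 3 : Lam) = ιMulti ℝ 6 (fun a => θ (cpl 3 a)) from rfl, iMulti6]
  rfl

lemma vveq4 : vv 4 = θ1 0 * (θ1 1 * (θ1 2 * (θ1 3 * (θ1 5 * (θ1 6))))) := by
  rw [show (vv 4 : Lam) = ιMulti ℝ 6 (fun a => θ (cpl 4 a)) from rfl, iMulti6]
  rfl

lemma vveq5 : vv 5 = θ1 0 * (θ1 1 * (θ1 2 * (θ1 3 * (θ1 4 * (θ1 6))))) := by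
  rw [show (vv 5 : Lam) = ιMulti ℝ 6 (fun a => θ (cpl 5 a)) from rfl, iMulti6]
  rfl

lemma vveq6 : vv 6 = θ1 0 * (θ1 1 * (θ1 2 * (θ1 3 * (θ1 4 * (θ1 5))))) := by
  rw [show (vv 6 : Lam) = ιMulti ℝ 6 (fun a => θ (cpl 6 a)) from rfl, iMulti6]
  rfl

lemma base0 : bb 0 * psi0 = J (Φ (Pi.single 0 1 : Fin 21 → ℝ)) := by
  rw [show (bb 0 : Lam) = θ1 0 * θ1 1 from rfl, hmul0,
      show J (Φ (Pi.single 0 1 : Fin 21 → ℝ)) = ∑ m, Φ (Pi.single (0:Fin 21) (1:ℝ) : Fin 21 → ℝ) m • vv m from rfl,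
      Fin.sum_univ_seven, Φapp0, Φapp1, Φapp2, Φapp3, Φapp4, Φapp5, Φapp6]
  simp (config := { decide := true }) [Pi.single_apply, vveq0, vveq1, vveq2, vveq3, vveq4, vveq5, vveq6, zero_smul, one_smul, neg_smul, add_zero, zero_add, sub_zero, zero_sub, smul_zero, neg_neg, neg_zero]

lemma base1 : bb 1 * psi0 = J (Φ (Pi.single 1 1 : Fin 21 → ℝ)) := by
  rw [show (bb 1 : Lam) = θ1 0 * θ1 2 from rfl, hmul1,
      show J (Φ (Pi.single 1 1 : Fin 21 → ℝ)) = ∑ m, Φ (Pi.single (1:Fin 21) (1:ℝ) : Fin 21 → ℝ) m • vv m from rfl,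
      Fin.sum_univ_seven, Φapp0, Φapp1, Φapp2, Φapp3, Φapp4, Φapp5, Φapp6]
  simp (config := { decide := true }) [Pi.single_apply, vveq0, vveq1, vveq2, vveq3, vveq4, vveq5, vveq6, zero_smul, one_smul, neg_smul, add_zero, zero_add, sub_zero, zero_sub, smul_zero, neg_neg, neg_zero]

lemma base2 : bb 2 * psi0 = J (Φ (Pi.single 2 1 : Fin 21 → ℝ)) := by
  rw [show (bb 2 : Lam) = θ1 0 * θ1 3 from rfl, hmul2,
      show J (Φ (Pi.single 2 1 : Fin 21 → ℝ)) = ∑ m, Φ (Pi.single (2:Fin 21) (1:ℝ) : Fin 21 → ℝ) m • vv m from rfl,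
      Fin.sum_univ_seven, Φapp0, Φapp1, Φapp2, Φapp3, Φapp4, Φapp5, Φapp6]
  simp (config := { decide := true }) [Pi.single_apply, vveq0, vveq1, vveq2, vveq3, vveq4, vveq5, vveq6, zero_smul, one_smul, neg_smul, add_zero, zero_add, sub_zero, zero_sub, smul_zero, neg_neg, neg_zero]

lemma base3 : bb 3 * psi0 = J (Φ (Pi.single 3 1 : Fin 21 → ℝ)) := by
  rw [show (bb 3 : Lam) = θ1 0 * θ1 4 from rfl, hmul3,
      show J (Φ (Pi.single 3 1 : Fin 21 → ℝ)) = ∑ m, Φ (Pi.single (3:Fin 21) (1:ℝ) : Fin 21 → ℝ) m • vv m from rfl,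
      Fin.sum_univ_seven, Φapp0, Φapp1, Φapp2, Φapp3, Φapp4, Φapp5, Φapp6]
  simp (config := { decide := true }) [Pi.single_apply, vveq0, vveq1, vveq2, vveq3, vveq4, vveq5, vveq6, zero_smul, one_smul, neg_smul, add_zero, zero_add, sub_zero, zero_sub, smul_zero, neg_neg, neg_zero]

lemma base4 : bb 4 * psi0 = J (Φ (Pi.single 4 1 : Fin 21 → ℝ)) := by
  rw [show (bb 4 : Lam) = θ1 0 * θ1 5 from rfl, hmul4,
      show J (Φ (Pi.single 4 1 : Fin 21 → ℝ)) = ∑ m, Φ (Pi.single (4:Fin 21) (1:ℝ) : Fin 21 → ℝ) m • vv m from rfl,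
      Fin.sum_univ_seven, Φapp0, Φapp1, Φapp2, Φapp3, Φapp4, Φapp5, Φapp6]
  simp (config := { decide := true }) [Pi.single_apply, vveq0, vveq1, vveq2, vveq3, vveq4, vveq5, vveq6, zero_smul, one_smul, neg_smul, add_zero, zero_add, sub_zero, zero_sub, smul_zero, neg_neg, neg_zero]

lemma base5 : bb 5 * psi0 = J (Φ (Pi.single 5 1 : Fin 21 → ℝ)) := by
  rw [show (bb 5 : Lam) = θ1 0 * θ1 6 from rfl, hmul5,
      show J (Φ (Pi.single 5 1 : Fin 21 → ℝ)) = ∑ m, Φ (Pi.single (5:Fin 21) (1:ℝ) : Fin 21 → ℝ) m • vv m from rfl,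
      Fin.sum_univ_seven, Φapp0, Φapp1, Φapp2, Φapp3, Φapp4, Φapp5, Φapp6]
  simp (config := { decide := true }) [Pi.single_apply, vveq0, vveq1, vveq2, vveq3, vveq4, vveq5, vveq6, zero_smul, one_smul, neg_smul, add_zero, zero_add, sub_zero, zero_sub, smul_zero, neg_neg, neg_zero]

lemma base6 : bb 6 * psi0 = J (Φ (Pi.single 6 1 : Fin 21 → ℝ)) := by
  rw [show (bb 6 : Lam) = θ1 1 * θ1 2 from rfl, hmul6,
      show J (Φ (Pi.single 6 1 : Fin 21 → ℝ)) = ∑ m, Φ (Pi.single (6:Fin 21) (1:ℝ) : Fin 21 → ℝ) m • vv m from rfl,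
      Fin.sum_univ_seven, Φapp0, Φapp1, Φapp2, Φapp3, Φapp4, Φapp5, Φapp6]
  simp (config := { decide := true }) [Pi.single_apply, vveq0, vveq1, vveq2, vveq3, vveq4, vveq5, vveq6, zero_smul, one_smul, neg_smul, add_zero, zero_add, sub_zero, zero_sub, smul_zero, neg_neg, neg_zero]

lemma base7 : bb 7 * psi0 = J (Φ (Pi.single 7 1 : Fin 21 → ℝ)) := by
  rw [show (bb 7 : Lam) = θ1 1 * θ1 3 from rfl, hmul7,
      show J (Φ (Pi.single 7 1 : Fin 21 → ℝ)) = ∑ m, Φ (Pi.single (7:Fin 21) (1:ℝ) : Fin 21 → ℝ) m • vv m from rfl,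
      Fin.sum_univ_seven, Φapp0, Φapp1, Φapp2, Φapp3, Φapp4, Φapp5, Φapp6]
  simp (config := { decide := true }) [Pi.single_apply, vveq0, vveq1, vveq2, vveq3, vveq4, vveq5, vveq6, zero_smul, one_smul, neg_smul, add_zero, zero_add, sub_zero, zero_sub, smul_zero, neg_neg, neg_zero]

lemma base8 : bb 8 * psi0 = J (Φ (Pi.single 8 1 : Fin 21 → ℝ)) := by
  rw [show (bb 8 : Lam) = θ1 1 * θ1 4 from rfl, hmul8,
      show J (Φ (Pi.single 8 1 : Fin 21 → ℝ)) = ∑ m, Φ (Pi.single (8:Fin 21) (1:ℝ) : Fin 21 → ℝ) m • vv m from rfl,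
      Fin.sum_univ_seven, Φapp0, Φapp1, Φapp2, Φapp3, Φapp4, Φapp5, Φapp6]
  simp (config := { decide := true }) [Pi.single_apply, vveq0, vveq1, vveq2, vveq3, vveq4, vveq5, vveq6, zero_smul, one_smul, neg_smul, add_zero, zero_add, sub_zero, zero_sub, smul_zero, neg_neg, neg_zero]

lemma base9 : bb 9 * psi0 = J (Φ (Pi.single 9 1 : Fin 21 → ℝ)) := by
  rw [show (bb 9 : Lam) = θ1 1 * θ1 5 from rfl, hmul9,
      show J (Φ (Pi.single 9 1 : Fin 21 → ℝ)) = ∑ m, Φ (Pi.single (9:Fin 21) (1:ℝ) : Fin 21 → ℝ) m • vv m from rfl,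
      Fin.sum_univ_seven, Φapp0, Φapp1, Φapp2, Φapp3, Φapp4, Φapp5, Φapp6]
  simp (config := { decide := true }) [Pi.single_apply, vveq0, vveq1, vveq2, vveq3, vveq4, vveq5, vveq6, zero_smul, one_smul, neg_smul, add_zero, zero_add, sub_zero, zero_sub, smul_zero, neg_neg, neg_zero]

lemma base10 : bb 10 * psi0 = J (Φ (Pi.single 10 1 : Fin 21 → ℝ)) := by
  rw [show (bb 10 : Lam) = θ1 1 * θ1 6 from rfl, hmul10,
      show J (Φ (Pi.single 10 1 : Fin 21 → ℝ)) = ∑ m, Φ (Pi.single (10:Fin 21) (1:ℝ) : Fin 21 → ℝ) m • vv m from rfl,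
      Fin.sum_univ_seven, Φapp0, Φapp1, Φapp2, Φapp3, Φapp4, Φapp5, Φapp6]
  simp (config := { decide := true }) [Pi.single_apply, vveq0, vveq1, vveq2, vveq3, vveq4, vveq5, vveq6, zero_smul, one_smul, neg_smul, add_zero, zero_add, sub_zero, zero_sub, smul_zero, neg_neg, neg_zero]

lemma base11 : bb 11 * psi0 = J (Φ (Pi.single 11 1 : Fin 21 → ℝ)) := by
  rw [show (bb 11 : Lam) = θ1 2 * θ1 3 from rfl, hmul11,
      show J (Φ (Pi.single 11 1 : Fin 21 → ℝ)) = ∑ m, Φ (Pi.single (11:Fin 21) (1:ℝ) : Fin 21 → ℝ) m • vv m from rfl,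
      Fin.sum_univ_seven, Φapp0, Φapp1, Φapp2, Φapp3, Φapp4, Φapp5, Φapp6]
  simp (config := { decide := true }) [Pi.single_apply, vveq0, vveq1, vveq2, vveq3, vveq4, vveq5, vveq6, zero_smul, one_smul, neg_smul, add_zero, zero_add, sub_zero, zero_sub, smul_zero, neg_neg, neg_zero]

lemma base12 : bb 12 * psi0 = J (Φ (Pi.single 12 1 : Fin 21 → ℝ)) := by
  rw [show (bb 12 : Lam) = θ1 2 * θ1 4 from rfl, hmul12,
      show J (Φ (Pi.single 12 1 : Fin 21 → ℝ)) = ∑ m, Φ (Pi.single (12:Fin 21) (1:ℝ) : Fin 21 → ℝ) m • vv m from rfl,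
      Fin.sum_univ_seven, Φapp0, Φapp1, Φapp2, Φapp3, Φapp4, Φapp5, Φapp6]
  simp (config := { decide := true }) [Pi.single_apply, vveq0, vveq1, vveq2, vveq3, vveq4, vveq5, vveq6, zero_smul, one_smul, neg_smul, add_zero, zero_add, sub_zero, zero_sub, smul_zero, neg_neg, neg_zero]

lemma base13 : bb 13 * psi0 = J (Φ (Pi.single 13 1 : Fin 21 → ℝ)) := by
  rw [show (bb 13 : Lam) = θ1 2 * θ1 5 from rfl, hmul13,
      show J (Φ (Pi.single 13 1 : Fin 21 → ℝ)) = ∑ m, Φ (Pi.single (13:Fin 21) (1:ℝ) : Fin 21 → ℝ) m • vv m from rfl,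
      Fin.sum_univ_seven, Φapp0, Φapp1, Φapp2, Φapp3, Φapp4, Φapp5, Φapp6]
  simp (config := { decide := true }) [Pi.single_apply, vveq0, vveq1, vveq2, vveq3, vveq4, vveq5, vveq6, zero_smul, one_smul, neg_smul, add_zero, zero_add, sub_zero, zero_sub, smul_zero, neg_neg, neg_zero]

lemma base14 : bb 14 * psi0 = J (Φ (Pi.single 14 1 : Fin 21 → ℝ)) := by
  rw [show (bb 14 : Lam) = θ1 2 * θ1 6 from rfl, hmul14,
      show J (Φ (Pi.single 14 1 : Fin 21 → ℝ)) = ∑ m, Φ (Pi.single (14:Fin 21) (1:ℝ) : Fin 21 → ℝ) m • vv m from rfl,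
      Fin.sum_univ_seven, Φapp0, Φapp1, Φapp2, Φapp3, Φapp4, Φapp5, Φapp6]
  simp (config := { decide := true }) [Pi.single_apply, vveq0, vveq1, vveq2, vveq3, vveq4, vveq5, vveq6, zero_smul, one_smul, neg_smul, add_zero, zero_add, sub_zero, zero_sub, smul_zero, neg_neg, neg_zero]

lemma base15 : bb 15 * psi0 = J (Φ (Pi.single 15 1 : Fin 21 → ℝ)) := by
  rw [show (bb 15 : Lam) = θ1 3 * θ1 4 from rfl, hmul15,
      show J (Φ (Pi.single 15 1 : Fin 21 → ℝ)) = ∑ m, Φ (Pi.single (15:Fin 21) (1:ℝ) : Fin 21 → ℝ) m • vv m from rfl,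
      Fin.sum_univ_seven, Φapp0, Φapp1, Φapp2, Φapp3, Φapp4, Φapp5, Φapp6]
  simp (config := { decide := true }) [Pi.single_apply, vveq0, vveq1, vveq2, vveq3, vveq4, vveq5, vveq6, zero_smul, one_smul, neg_smul, add_zero, zero_add, sub_zero, zero_sub, smul_zero, neg_neg, neg_zero]

lemma base16 : bb 16 * psi0 = J (Φ (Pi.single 16 1 : Fin 21 → ℝ)) := by
  rw [show (bb 16 : Lam) = θ1 3 * θ1 5 from rfl, hmul16,
      show J (Φ (Pi.single 16 1 : Fin 21 → ℝ)) = ∑ m, Φ (Pi.single (16:Fin 21) (1:ℝ) : Fin 21 → ℝ) m • vv m from rfl,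
      Fin.sum_univ_seven, Φapp0, Φapp1, Φapp2, Φapp3, Φapp4, Φapp5, Φapp6]
  simp (config := { decide := true }) [Pi.single_apply, vveq0, vveq1, vveq2, vveq3, vveq4, vveq5, vveq6, zero_smul, one_smul, neg_smul, add_zero, zero_add, sub_zero, zero_sub, smul_zero, neg_neg, neg_zero]

lemma base17 : bb 17 * psi0 = J (Φ (Pi.single 17 1 : Fin 21 → ℝ)) := by
  rw [show (bb 17 : Lam) = θ1 3 * θ1 6 from rfl, hmul17,
      show J (Φ (Pi.single 17 1 : Fin 21 → ℝ)) = ∑ m, Φ (Pi.single (17:Fin 21) (1:ℝ) : Fin 21 → ℝ) m • vv m from rfl,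
      Fin.sum_univ_seven, Φapp0, Φapp1, Φapp2, Φapp3, Φapp4, Φapp5, Φapp6]
  simp (config := { decide := true }) [Pi.single_apply, vveq0, vveq1, vveq2, vveq3, vveq4, vveq5, vveq6, zero_smul, one_smul, neg_smul, add_zero, zero_add, sub_zero, zero_sub, smul_zero, neg_neg, neg_zero]

lemma base18 : bb 18 * psi0 = J (Φ (Pi.single 18 1 : Fin 21 → ℝ)) := by
  rw [show (bb 18 : Lam) = θ1 4 * θ1 5 from rfl, hmul18,
      show J (Φ (Pi.single 18 1 : Fin 21 → ℝ)) = ∑ m, Φ (Pi.single (18:Fin 21) (1:ℝ) : Fin 21 → ℝ) m • vv m from rfl,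
      Fin.sum_univ_seven, Φapp0, Φapp1, Φapp2, Φapp3, Φapp4, Φapp5, Φapp6]
  simp (config := { decide := true }) [Pi.single_apply, vveq0, vveq1, vveq2, vveq3, vveq4, vveq5, vveq6, zero_smul, one_smul, neg_smul, add_zero, zero_add, sub_zero, zero_sub, smul_zero, neg_neg, neg_zero]

lemma base19 : bb 19 * psi0 = J (Φ (Pi.single 19 1 : Fin 21 → ℝ)) := by
  rw [show (bb 19 : Lam) = θ1 4 * θ1 6 from rfl, hmul19,
      show J (Φ (Pi.single 19 1 : Fin 21 → ℝ)) = ∑ m, Φ (Pi.single (19:Fin 21) (1:ℝ) : Fin 21 → ℝ) m • vv m from rfl,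
      Fin.sum_univ_seven, Φapp0, Φapp1, Φapp2, Φapp3, Φapp4, Φapp5, Φapp6]
  simp (config := { decide := true }) [Pi.single_apply, vveq0, vveq1, vveq2, vveq3, vveq4, vveq5, vveq6, zero_smul, one_smul, neg_smul, add_zero, zero_add, sub_zero, zero_sub, smul_zero, neg_neg, neg_zero]

lemma base20 : bb 20 * psi0 = J (Φ (Pi.single 20 1 : Fin 21 → ℝ)) := by
  rw [show (bb 20 : Lam) = θ1 5 * θ1 6 from rfl, hmul20,
      show J (Φ (Pi.single 20 1 : Fin 21 → ℝ)) = ∑ m, Φ (Pi.single (20:Fin 21) (1:ℝ) : Fin 21 → ℝ) m • vv m from rfl,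
      Fin.sum_univ_seven, Φapp0, Φapp1, Φapp2, Φapp3, Φapp4, Φapp5, Φapp6]
  simp (config := { decide := true }) [Pi.single_apply, vveq0, vveq1, vveq2, vveq3, vveq4, vveq5, vveq6, zero_smul, one_smul, neg_smul, add_zero, zero_add, sub_zero, zero_sub, smul_zero, neg_neg, neg_zero]

lemma base : ∀ k : Fin 21, bb k * psi0 = J (Φ (Pi.single k 1 : Fin 21 → ℝ)) := by
  intro k
  fin_cases k
  · exact base0
  · exact base1
  · exact base2
  · exact base3
  · exact base4
  · exact base5
  · exact base6
  · exact base7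
  · exact base8
  · exact base9
  · exact base10
  · exact base11
  · exact base12
  · exact base13
  · exact base14
  · exact base15
  · exact base16
  · exact base17
  · exact base18
  · exact base19
  · exact base20

lemma single_expand (c : Fin 21 → ℝ) : c = ∑ k, c k • (Pi.single k 1 : Fin 21 → ℝ) := by
  funext j
  rw [Finset.sum_apply]
  simp [Pi.single_apply]

lemma hTF (c : Fin 21 → ℝ) : F c * psi0 = J (Φ c) := by
  conv_lhs => rw [single_expand c]
  conv_rhs => rw [single_expand c]
  rw [map_sum, Finset.sum_mul]
  simp only [F, map_smul, Fintype.linearCombination_apply_single, one_smul, smul_mul_assoc,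
    map_sum]
  exact Finset.sum_congr rfl fun k _ => by rw [base k]

lemma dk1 : ∀ k l : Fin 21, (pi1 l = pi1 k ∧ pi2 l = pi2 k) ↔ l = k := by decide
lemma dk2 : ∀ k l : Fin 21, ¬(pi1 l = pi2 k ∧ pi2 l = pi1 k) := by decide

lemma hGb (k l : Fin 21) : G (bb l) k = if l = k then 1 else 0 := by
  have hG : G (bb l) k = evalForm 2 ![e (pi1 k), e (pi2 k)] (θ1 (pi1 l) * θ1 (pi2 l)) := rfl
  rw [hG, eval2]
  by_cases h5 : l = k
  · subst h5
    rw [if_pos rfl, if_pos rfl, if_pos rfl,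
      if_neg (fun h3 : pi1 l = pi2 l => dk2 l l ⟨h3, h3.symm⟩)]
    norm_num
  · rw [if_neg h5]
    by_cases h1 : pi1 l = pi1 k
    · have h2 : ¬(pi2 l = pi2 k) := fun h2 => h5 ((dk1 k l).mp ⟨h1, h2⟩)
      by_cases h3 : pi1 l = pi2 k
      · have h4 : ¬(pi2 l = pi1 k) := fun h4 => dk2 k l ⟨h3, h4⟩
        rw [if_pos h1, if_neg h2, if_pos h3, if_neg h4]; ring
      · rw [if_neg h2, if_neg h3]; ring
    · by_cases h3 : pi1 l = pi2 k
      · have h4 : ¬(pi2 l = pi1 k) := fun h4 => dk2 k l ⟨h3, h4⟩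
        rw [if_neg h1, if_neg h4]; ring
      · rw [if_neg h1, if_neg h3]; ring

lemma hGF (c : Fin 21 → ℝ) : G (F c) = c := by
  funext k
  rw [show F c = ∑ l, c l • bb l from rfl, map_sum, Finset.sum_apply]
  simp only [map_smul, Pi.smul_apply, smul_eq_mul, hGb]
  simp

lemma Finj : Function.Injective F := Function.LeftInverse.injective hGF

lemma dinj : ∀ (m : Fin 7) (a b : Fin 6), cpl m a = cpl m b → a = b := by decide
lemma dρ : ∀ m m' : Fin 7, m ≠ m' → cpl m (ρ m m') = m' := by decide
lemma dno : ∀ (m' : Fin 7) (j : Fin 6), cpl m' j ≠ m' := by decide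

lemma hHv (m' m : Fin 7) : H (vv m) m' = if m = m' then 1 else 0 := by
  have hH : H (vv m) m' = evalForm 6 (fun b => e (cpl m' b)) (ιMulti ℝ 6 (fun a => θ (cpl m a))) :=
    rfl
  rw [hH, evalForm_iMulti]
  have hM : (Matrix.of fun a b => θ (cpl m a) (e (cpl m' b))) =
      Matrix.of fun a b => if cpl m a = cpl m' b then (1:ℝ) else 0 := by
    ext a b
    rw [Matrix.of_apply, Matrix.of_apply, theta_apply]
  rw [hM]
  by_cases h : m = m'
  · subst h
    rw [if_pos rfl]
    have h1 : (Matrix.of fun a b => if cpl m a = cpl m b then (1:ℝ) else 0) = 1 := by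
      ext a b
      rw [Matrix.of_apply, Matrix.one_apply]
      by_cases hab : a = b
      · rw [if_pos (by rw [hab]), if_pos hab]
      · rw [if_neg (fun hc => hab (dinj m a b hc)), if_neg hab]
    rw [h1, Matrix.det_one]
  · rw [if_neg h]
    apply Matrix.det_eq_zero_of_row_eq_zero (ρ m m')
    intro j
    rw [Matrix.of_apply, if_neg]
    rw [dρ m m' h]
    exact fun hc => dno m' j hc.symm

lemma hHJ (y : Fin 7 → ℝ) : H (J y) = y := by
  funext m'
  rw [show J y = ∑ m, y m • vv m from rfl, map_sum, Finset.sum_apply]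
  simp only [map_smul, Pi.smul_apply, smul_eq_mul, hHv]
  simp

lemma Jinj : Function.Injective J := Function.LeftInverse.injective hHJ

lemma vd_expand (f : Vd) : f = ∑ i, f (e i) • θ i := by
  apply LinearMap.ext; intro x
  have hx : (∑ i, x i • e i) = x := by
    funext j
    rw [Finset.sum_apply]
    simp [e, Pi.single_apply]
  conv_lhs => rw [← hx]
  rw [map_sum]
  simp [θ, mul_comm]

lemma hex : ∀ i j : Fin 7, i < j → ∃ k : Fin 21, pi1 k = i ∧ pi2 k = j := by decide

lemma hbb (i j : Fin 7) : θ1 i * θ1 j ∈ Submodule.span ℝ (Set.range bb) := by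
  rcases lt_trichotomy i j with h | h | h
  · obtain ⟨k, hk1, hk2⟩ := hex i j h
    exact Submodule.subset_span ⟨k, by rw [show bb k = θ1 (pi1 k) * θ1 (pi2 k) from rfl, hk1, hk2]⟩
  · subst h
    rw [θ1_sq]
    exact Submodule.zero_mem _
  · rw [θ1_anticomm]
    obtain ⟨k, hk1, hk2⟩ := hex j i h
    exact Submodule.neg_mem _
      (Submodule.subset_span ⟨k, by rw [show bb k = θ1 (pi1 k) * θ1 (pi2 k) from rfl, hk1, hk2]⟩)

lemma h2span : (⋀[ℝ]^2 Vd : Submodule ℝ Lam) ≤ LinearMap.range F := by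
  rw [← ExteriorAlgebra.ιMulti_span_fixedDegree, Submodule.span_le]
  rintro _ ⟨y, rfl⟩
  rw [SetLike.mem_coe, F, Fintype.range_linearCombination, iMulti2 y]
  rw [show ι ℝ (y 0) = ι ℝ (∑ i, (y 0) (e i) • θ i) from by rw [← vd_expand (y 0)],
      show ι ℝ (y 1) = ι ℝ (∑ i, (y 1) (e i) • θ i) from by rw [← vd_expand (y 1)]]
  rw [map_sum, map_sum, Finset.sum_mul]
  apply Submodule.sum_mem
  intro i _
  rw [Finset.mul_sum]
  apply Submodule.sum_mem
  intro j _
  rw [map_smul, map_smul, smul_mul_assoc, mul_smul_comm]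
  exact Submodule.smul_mem _ _ (Submodule.smul_mem _ _ (hbb i j))

lemma hFrange : LinearMap.range F ≤ (⋀[ℝ]^2 Vd : Submodule ℝ Lam) := by
  rw [F, Fintype.range_linearCombination, Submodule.span_le]
  rintro _ ⟨k, rfl⟩
  refine ExteriorAlgebra.ιMulti_range ℝ 2 ⟨![θ (pi1 k), θ (pi2 k)], ?_⟩
  rw [iMulti2]
  rfl

lemma hsurj : Function.Surjective Φ := by
  intro y
  refine ⟨![y 2, y 1, y 4, y 3, y 6, y 5, y 0, 0, 0, 0, 0, 0, 0, 0, 0, 0, 0, 0, 0, 0, 0],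
    funext fun m => ?_⟩
  fin_cases m
  · show y 0 + 0 + 0 = y 0; ring
  · show y 1 - 0 + 0 = y 1; ring
  · show y 2 - 0 - 0 = y 2; ring
  · show y 3 + 0 - 0 = y 3; ring
  · show y 4 + 0 + 0 = y 4; ring
  · show y 5 - 0 + 0 = y 5; ring
  · show y 6 - 0 - 0 = y 6; ring

lemma hW : (⋀[ℝ]^2 Vd ⊓ LinearMap.ker (LinearMap.mulRight ℝ psi0) : Submodule ℝ Lam) =
    Submodule.map F (LinearMap.ker Φ) := by
  apply le_antisymm
  · rintro α hα
    obtain ⟨h1, h2⟩ := Submodule.mem_inf.mp hα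
    obtain ⟨c, rfl⟩ := h2span h1
    have hz : F c * psi0 = 0 := by
      have := LinearMap.mem_ker.mp h2
      rwa [LinearMap.mulRight_apply] at this
    have hJz : J (Φ c) = 0 := by rw [← hTF c]; exact hz
    have hc : Φ c = 0 := Jinj (hJz.trans (map_zero J).symm)
    exact Submodule.mem_map_of_mem (LinearMap.mem_ker.mpr hc)
  · rintro _ ⟨c, hc, rfl⟩
    refine Submodule.mem_inf.mpr ⟨hFrange (LinearMap.mem_range_self F c), ?_⟩
    rw [LinearMap.mem_ker, LinearMap.mulRight_apply, hTF c, LinearMap.mem_ker.mp hc, map_zero]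

/-- the subspace `Λ²₁₄ = {α ∈ Λ²(ℝ⁷)* : α ∧ ψ₀ = 0}`, i.e. the kernel of
wedging with `ψ₀` on 2-forms, has dimension 14. -/
theorem finrank_lambda2_14 :
    Module.finrank ℝ
      ↥((⋀[ℝ]^2 Vd) ⊓ LinearMap.ker (LinearMap.mulRight ℝ psi0)) = 14 := by
  rw [hW, ← LinearEquiv.finrank_eq (Submodule.equivMapOfInjective F Finj (LinearMap.ker Φ))]
  have h1 := LinearMap.finrank_range_add_finrank_ker Φ
  rw [LinearMap.range_eq_top.mpr hsurj, finrank_top, Module.finrank_fin_fun,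
    Module.finrank_fin_fun] at h1
  omega
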